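/- The Albrecht–Skordis potential V(φ) = e^{−μφ}(A + (φ − B)²) with A > 0 is WBI of exponential order N = −μ: with the coordinate φ̄ = φ^{−1/2}, the function W̄_V(φ̄) = −2φ̄²(Bφ̄² − 1)/(Aφ̄⁴ + (Bφ̄² − 1)²) extends continuously to φ̄ = 0 with value 0 and vanishing derivative at 0. -/

import Mathlib

open Filter Set Topology

/-- For the Albrecht–Skordis potential `V(φ) = e^{−μφ}(A + (φ − B)²)` with `A > 0`,
under the coordinate `φ̄ = φ^{−1/2}` (i.e. `φ = φ̄⁻²`), the function
`W̄_V(φ̄) = −2φ̄²(Bφ̄² − 1)/(Aφ̄⁴ + (Bφ̄² − 1)²)` coincides with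
`V'(φ)/V(φ) + μ` for `φ̄ > 0`, takes the value `0` at `φ̄ = 0`, is continuous at `0`,
and has vanishing derivative at `0`; i.e. `V` is WBI of exponential order `N = −μ`. -/
theorem stmt11 (μ A B : ℝ) (hA : 0 < A) :
    let V : ℝ → ℝ := fun φ => Real.exp (-μ * φ) * (A + (φ - B)^2)
    let Wbar : ℝ → ℝ := fun x =>
      -2 * x^2 * (B * x^2 - 1) / (A * x^4 + (B * x^2 - 1)^2)
    (∀ x : ℝ, 0 < x → Wbar x = deriv V (x^2)⁻¹ / V (x^2)⁻¹ + μ) ∧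
    Wbar 0 = 0 ∧ ContinuousAt Wbar 0 ∧ HasDerivAt Wbar 0 0 := by
  intro V Wbar
  -- denominator is everywhere positive
  have hD : ∀ x : ℝ, 0 < A * x^4 + (B * x^2 - 1)^2 := by
    intro x
    by_cases hx : x = 0
    · simp [hx]
    · have h1 : 0 < A * x^4 := by positivity
      nlinarith [sq_nonneg (B * x^2 - 1)]
  -- derivative of V
  have hV : ∀ φ : ℝ, HasDerivAt V
      (Real.exp (-μ * φ) * (-μ) * (A + (φ - B)^2) + Real.exp (-μ * φ) * (2 * (φ - B))) φ := by
    intro φ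
    have hlin : HasDerivAt (fun t : ℝ => -μ * t) (-μ) φ := by
      simpa using (hasDerivAt_id φ).const_mul (-μ)
    have hexp : HasDerivAt (fun t : ℝ => Real.exp (-μ * t)) (Real.exp (-μ * φ) * (-μ)) φ :=
      hlin.exp
    have hpoly : HasDerivAt (fun t : ℝ => A + (t - B)^2) (2 * (φ - B)) φ := by
      have := (((hasDerivAt_id φ).sub_const B).pow 2).const_add A
      simpa using this
    exact hexp.mul hpoly
  refine ⟨?_, ?_, ?_, ?_⟩
  · intro x hx
    have hx2 : (0:ℝ) < x^2 := by positivity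
    set φ := (x^2)⁻¹ with hφ
    have hφpos : 0 < φ := by positivity
    have hE : (0:ℝ) < Real.exp (-μ * φ) := Real.exp_pos _
    have hP : (0:ℝ) < A + (φ - B)^2 := by positivity
    have hderiv : deriv V φ =
        Real.exp (-μ * φ) * (-μ) * (A + (φ - B)^2) + Real.exp (-μ * φ) * (2 * (φ - B)) :=
      (hV φ).deriv
    have hφx : φ = (x^2)⁻¹ := hφ
    show Wbar x = deriv V φ / V φ + μ
    rw [hderiv]
    have hVval : V φ = Real.exp (-μ * φ) * (A + (φ - B)^2) := rfl
    rw [hVval]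
    have hxne : x ≠ 0 := ne_of_gt hx
    have hDne : A * x^4 + (B * x^2 - 1)^2 ≠ 0 := ne_of_gt (hD x)
    show -2 * x^2 * (B * x^2 - 1) / (A * x^4 + (B * x^2 - 1)^2) = _
    rw [hφx]
    field_simp
    ring
  · show Wbar 0 = 0
    simp [Wbar]
  · -- continuity follows from differentiability; prove HasDerivAt first
    have hW : HasDerivAt Wbar 0 0 := by
      have hx2 : HasDerivAt (fun x : ℝ => x^2) 0 0 := by
        simpa using hasDerivAt_pow 2 (0:ℝ)
      have hx4 : HasDerivAt (fun x : ℝ => x^4) 0 0 := by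
        simpa using hasDerivAt_pow 4 (0:ℝ)
      have hn : HasDerivAt (fun x : ℝ => -2 * x^2 * (B * x^2 - 1)) 0 0 := by
        have := (hx2.const_mul (-2)).mul ((hx2.const_mul B).sub_const 1)
        simpa [Pi.mul_def, Pi.add_def, Pi.pow_def] using this
      have hd : HasDerivAt (fun x : ℝ => A * x^4 + (B * x^2 - 1)^2) 0 0 := by
        have := (hx4.const_mul A).add (((hx2.const_mul B).sub_const 1).pow 2)
        simpa [Pi.mul_def, Pi.add_def, Pi.pow_def] using this
      have hDne : A * (0:ℝ)^4 + (B * (0:ℝ)^2 - 1)^2 ≠ 0 := ne_of_gt (hD 0)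
      have key : HasDerivAt Wbar
          ((0 * (A * (0:ℝ)^4 + (B * (0:ℝ)^2 - 1)^2) - -2 * (0:ℝ)^2 * (B * (0:ℝ)^2 - 1) * 0)
            / (A * (0:ℝ)^4 + (B * (0:ℝ)^2 - 1)^2)^2) 0 := hn.div hd hDne
      simpa using key
    exact hW.continuousAt
  · have hx2 : HasDerivAt (fun x : ℝ => x^2) 0 0 := by
      simpa using hasDerivAt_pow 2 (0:ℝ)
    have hx4 : HasDerivAt (fun x : ℝ => x^4) 0 0 := by
      simpa using hasDerivAt_pow 4 (0:ℝ)
    have hn : HasDerivAt (fun x : ℝ => -2 * x^2 * (B * x^2 - 1)) 0 0 := by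
      have := (hx2.const_mul (-2)).mul ((hx2.const_mul B).sub_const 1)
      simpa [Pi.mul_def, Pi.add_def, Pi.pow_def] using this
    have hd : HasDerivAt (fun x : ℝ => A * x^4 + (B * x^2 - 1)^2) 0 0 := by
      have := (hx4.const_mul A).add (((hx2.const_mul B).sub_const 1).pow 2)
      simpa [Pi.mul_def, Pi.add_def, Pi.pow_def] using this
    have hDne : A * (0:ℝ)^4 + (B * (0:ℝ)^2 - 1)^2 ≠ 0 := ne_of_gt (hD 0)
    have key : HasDerivAt Wbar
        ((0 * (A * (0:ℝ)^4 + (B * (0:ℝ)^2 - 1)^2) - -2 * (0:ℝ)^2 * (B * (0:ℝ)^2 - 1) * 0)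
          / (A * (0:ℝ)^4 + (B * (0:ℝ)^2 - 1)^2)^2) 0 := hn.div hd hDne
    simpa using key
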